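/- arXiv:0903.0908 — 2 statements merged into one kernel-verified Lean document; each statement's English description precedes it below -/
import Mathlib

section
/- Under the stated water-wave setup, the relative pseudo-volumetric mass flux is well defined: the map x ↦ ∫_{−d}^{η(x)} √(ρ(x,y)) · (u(x,y) − c) dy is constant on ℝ. -/
open Set MeasureTheory

/-- Partial derivative in the first (horizontal) variable. -/
noncomputable def pdx (f : ℝ × ℝ → ℝ) (z : ℝ × ℝ) : ℝ := fderiv ℝ f z (1, 0)

/-- Partial derivative in the second (vertical) variable. -/
noncomputable def pdy (f : ℝ × ℝ → ℝ) (z : ℝ × ℝ) : ℝ := fderiv ℝ f z (0, 1)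

private theorem clm_pair (T : ℝ × ℝ →L[ℝ] ℝ) (a b : ℝ) :
    T (a, b) = a * T (1, 0) + b * T (0, 1) := by
  have h : (a, b) = a • ((1:ℝ), (0:ℝ)) + b • ((0:ℝ), (1:ℝ)) := by simp
  rw [h, map_add, T.map_smul, T.map_smul, smul_eq_mul, smul_eq_mul]

set_option maxHeartbeats 1000000 in
/-- The relative pseudo-volumetric mass flux is well defined: the integral
`∫_{-d}^{η x} √ρ (u − c) dy` does not depend on `x`. -/
theorem pseudo_mass_flux_well_defined
    (c L d g Patm : ℝ)
    (hc : 0 < c) (hL : 0 < L) (hd : 0 < d) (hg : 0 < g)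
    (η : ℝ → ℝ) (hηC3 : ContDiff ℝ 3 η)
    (hηper : ∀ x, η (x + L) = η x)
    (hηmean : (∫ x in (-(L/2))..(L/2), η x) = 0)
    (hηbed : ∀ x, -d < η x)
    (D : Set (ℝ × ℝ)) (hDdef : D = {z : ℝ × ℝ | -d < z.2 ∧ z.2 < η z.1})
    (u v ρ P : ℝ × ℝ → ℝ)
    (huC : ContDiffOn ℝ 2 u (closure D)) (hvC : ContDiffOn ℝ 2 v (closure D))
    (hρC : ContDiffOn ℝ 2 ρ (closure D)) (hPC : ContDiffOn ℝ 2 P (closure D))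
    (huper : ∀ x y, u (x + L, y) = u (x, y)) (hvper : ∀ x y, v (x + L, y) = v (x, y))
    (hρper : ∀ x y, ρ (x + L, y) = ρ (x, y)) (hPper : ∀ x y, P (x + L, y) = P (x, y))
    (hρpos : ∀ z ∈ closure D, 0 < ρ z)
    (hincomp : ∀ z ∈ D, pdx u z + pdy v z = 0)
    (hmass : ∀ z ∈ D, (u z - c) * pdx ρ z + v z * pdy ρ z = 0)
    (heuler1 : ∀ z ∈ D, ρ z * (u z - c) * pdx u z + ρ z * v z * pdy u z = -pdx P z)
    (heuler2 : ∀ z ∈ D, ρ z * (u z - c) * pdx v z + ρ z * v z * pdy v z = -pdy P z - g * ρ z)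
    (hkin : ∀ x, v (x, η x) = (u (x, η x) - c) * deriv η x)
    (hbed : ∀ x, v (x, -d) = 0)
    (hPsurf : ∀ x, P (x, η x) = Patm)
    (hnostag : ∀ z ∈ closure D, u z < c)
    :
    ∀ x₁ x₂ : ℝ,
      (∫ y in (-d)..(η x₁), Real.sqrt (ρ (x₁, y)) * (u (x₁, y) - c))
        = ∫ y in (-d)..(η x₂), Real.sqrt (ρ (x₂, y)) * (u (x₂, y) - c) := by
  intro x₁ x₂
  -- basic facts about η and the domain, proved before heavy definitions enter the context
  have hηd : Differentiable ℝ η := hηC3.differentiable (by norm_num)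
  have hη' : ∀ x, HasDerivAt η (deriv η x) x := fun x => (hηd x).hasDerivAt
  have hη2 : ContDiff ℝ 2 (deriv η) :=
    (contDiff_succ_iff_deriv.mp (by exact_mod_cast hηC3)).2.2
  have hη'' : ∀ x, HasDerivAt (deriv η) (deriv (deriv η) x) x :=
    fun x => ((hη2.differentiable (by norm_num)) x).hasDerivAt
  have hηcont : Continuous η := hηC3.continuous
  have hη'cont : Continuous (deriv η) := hη2.continuous
  have hDopen : IsOpen D := by
    rw [hDdef]
    exact (isOpen_lt continuous_const continuous_snd).inter
      (isOpen_lt continuous_snd (hηcont.comp continuous_fst))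
  have hh : ∀ x, 0 < η x + d := fun x => by have := hηbed x; linarith
  have hclosD : ∀ x y, -d ≤ y → y ≤ η x → (x, y) ∈ closure D := by
    intro x y h1 h2
    have hsub : ({x} ×ˢ Ioo (-d) (η x) : Set (ℝ × ℝ)) ⊆ D := by
      rintro ⟨a, bb⟩ ⟨ha, hb⟩
      simp only [mem_singleton_iff] at ha
      subst ha
      rw [hDdef]
      exact ⟨hb.1, hb.2⟩
    have : (x, y) ∈ closure ({x} ×ˢ Ioo (-d) (η x) : Set (ℝ × ℝ)) := by
      rw [closure_prod_eq, closure_singleton, closure_Ioo (by linarith [hηbed x] : (-d : ℝ) ≠ η x)]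
      exact ⟨rfl, h1, h2⟩
    exact closure_mono hsub this
  -- the flattening map sends the strip into the fluid domain
  have hmemD2 : ∀ x s : ℝ, 0 < s → s < 1 → ((x, -d + s * (η x + d)) : ℝ × ℝ) ∈ D := by
    intro x s hs0 hs1
    have hx := hh x
    rw [hDdef]
    constructor
    · show -d < -d + s * (η x + d); nlinarith
    · show -d + s * (η x + d) < η x; nlinarith
  have hclos2 : ∀ x s : ℝ, 0 ≤ s → s ≤ 1 →
      ((x, -d + s * (η x + d)) : ℝ × ℝ) ∈ closure D := by
    intro x s hs0 hs1
    have hx := hh x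
    exact hclosD x _ (by nlinarith) (by nlinarith)
  -- the pseudo-flux fields and all relevant derivative data
  set w : ℝ × ℝ → ℝ := fun z => Real.sqrt (ρ z) * (u z - c) with hw_def
  set b : ℝ × ℝ → ℝ := fun z => Real.sqrt (ρ z) * v z with hb_def
  set Φ : ℝ × ℝ → ℝ × ℝ := fun p => (p.1, -d + p.2 * (η p.1 + d)) with hΦ_def
  set A : ℝ × ℝ → ℝ := fun p => (η p.1 + d) * w (Φ p) with hA_def
  set B : ℝ × ℝ → ℝ := fun p => b (Φ p) - p.2 * deriv η p.1 * w (Φ p) with hB_def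
  set W' : ℝ × ℝ → (ℝ × ℝ →L[ℝ] ℝ) := fun z =>
    Real.sqrt (ρ z) • fderiv ℝ u z
      + (u z - c) • ((1 / (2 * Real.sqrt (ρ z))) • fderiv ℝ ρ z) with hW'_def
  set V' : ℝ × ℝ → (ℝ × ℝ →L[ℝ] ℝ) := fun z =>
    Real.sqrt (ρ z) • fderiv ℝ v z
      + v z • ((1 / (2 * Real.sqrt (ρ z))) • fderiv ℝ ρ z) with hV'_def
  set Y' : ℝ × ℝ → (ℝ × ℝ →L[ℝ] ℝ) := fun p =>
    p.2 • (deriv η p.1 • ContinuousLinearMap.fst ℝ ℝ ℝ)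
      + (η p.1 + d) • ContinuousLinearMap.snd ℝ ℝ ℝ with hY'_def
  set Φ' : ℝ × ℝ → (ℝ × ℝ →L[ℝ] ℝ × ℝ) := fun p =>
    (ContinuousLinearMap.fst ℝ ℝ ℝ).prod (Y' p) with hΦ'_def
  set T' : ℝ × ℝ → (ℝ × ℝ →L[ℝ] ℝ) := fun p =>
    p.2 • (deriv (deriv η) p.1 • ContinuousLinearMap.fst ℝ ℝ ℝ)
      + deriv η p.1 • ContinuousLinearMap.snd ℝ ℝ ℝ with hT'_def
  set A' : ℝ × ℝ → (ℝ × ℝ →L[ℝ] ℝ) := fun p =>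
    (η p.1 + d) • ((W' (Φ p)).comp (Φ' p))
      + w (Φ p) • (deriv η p.1 • ContinuousLinearMap.fst ℝ ℝ ℝ) with hA'_def
  set B' : ℝ × ℝ → (ℝ × ℝ →L[ℝ] ℝ) := fun p =>
    (V' (Φ p)).comp (Φ' p)
      - ((p.2 * deriv η p.1) • ((W' (Φ p)).comp (Φ' p)) + w (Φ p) • T' p) with hB'_def
  -- differentiability of the fields on D
  have hmemD : ∀ z ∈ D, closure D ∈ nhds z :=
    fun z hz => mem_nhds_iff.mpr ⟨D, subset_closure, hDopen, hz⟩
  have hud : ∀ z ∈ D, HasFDerivAt u (fderiv ℝ u z) z := fun z hz =>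
    ((huC.differentiableOn (by norm_num) z (subset_closure hz)).differentiableAt
      (hmemD z hz)).hasFDerivAt
  have hvd : ∀ z ∈ D, HasFDerivAt v (fderiv ℝ v z) z := fun z hz =>
    ((hvC.differentiableOn (by norm_num) z (subset_closure hz)).differentiableAt
      (hmemD z hz)).hasFDerivAt
  have hρd : ∀ z ∈ D, HasFDerivAt ρ (fderiv ℝ ρ z) z := fun z hz =>
    ((hρC.differentiableOn (by norm_num) z (subset_closure hz)).differentiableAt
      (hmemD z hz)).hasFDerivAt
  have hsqd : ∀ z ∈ D, HasFDerivAt (fun q => Real.sqrt (ρ q))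
      ((1 / (2 * Real.sqrt (ρ z))) • fderiv ℝ ρ z) z := fun z hz =>
    (Real.hasDerivAt_sqrt (ne_of_gt (hρpos z (subset_closure hz)))).comp_hasFDerivAt z (hρd z hz)
  have hwd : ∀ z ∈ D, HasFDerivAt w (W' z) z := fun z hz =>
    (hsqd z hz).mul ((hud z hz).sub_const c)
  have hbd2 : ∀ z ∈ D, HasFDerivAt b (V' z) z := fun z hz =>
    (hsqd z hz).mul (hvd z hz)
  -- the key pointwise divergence identity for (w, b)
  have hkey : ∀ z ∈ D, W' z (1, 0) + V' z (0, 1) = 0 := by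
    intro z hz
    have h1 := hincomp z hz
    have h2 := hmass z hz
    simp only [pdx, pdy] at h1 h2
    have hs : Real.sqrt (ρ z) ≠ 0 :=
      ne_of_gt (Real.sqrt_pos.mpr (hρpos z (subset_closure hz)))
    simp only [hW'_def, hV'_def, ContinuousLinearMap.add_apply, ContinuousLinearMap.smul_apply,
      smul_eq_mul]
    linear_combination Real.sqrt (ρ z) * h1 + (1 / (2 * Real.sqrt (ρ z))) * h2
  -- Φ maps the strips appropriately
  have hΦD : ∀ p : ℝ × ℝ, p.2 ∈ Ioo (0:ℝ) 1 → Φ p ∈ D :=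
    fun p hp => hmemD2 p.1 p.2 hp.1 hp.2
  -- derivatives of A and B on the open strip
  have hYd : ∀ p : ℝ × ℝ, HasFDerivAt (fun q : ℝ × ℝ => -d + q.2 * (η q.1 + d)) (Y' p) p := by
    intro p
    exact (hasFDerivAt_snd.mul
      (((hη' p.1).comp_hasFDerivAt p hasFDerivAt_fst).add_const d)).const_add (-d)
  have hΦd : ∀ p : ℝ × ℝ, HasFDerivAt Φ (Φ' p) p := fun p => hasFDerivAt_fst.prodMk (hYd p)
  have hAd : ∀ p : ℝ × ℝ, p.2 ∈ Ioo (0:ℝ) 1 → HasFDerivAt A (A' p) p := by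
    intro p hp
    have hz : Φ p ∈ D := hΦD p hp
    exact (((hη' p.1).comp_hasFDerivAt p hasFDerivAt_fst).add_const d).mul
      ((hwd _ hz).comp p (hΦd p))
  have hBd : ∀ p : ℝ × ℝ, p.2 ∈ Ioo (0:ℝ) 1 → HasFDerivAt B (B' p) p := by
    intro p hp
    have hz : Φ p ∈ D := hΦD p hp
    exact ((hbd2 _ hz).comp p (hΦd p)).sub
      ((hasFDerivAt_snd.mul ((hη'' p.1).comp_hasFDerivAt p hasFDerivAt_fst)).mul
        ((hwd _ hz).comp p (hΦd p)))
  -- the divergence of (A, B) vanishes on the open strip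
  have hdiv0 : ∀ p : ℝ × ℝ, p.2 ∈ Ioo (0:ℝ) 1 → A' p (1, 0) + B' p (0, 1) = 0 := by
    intro p hp
    have hz : Φ p ∈ D := hΦD p hp
    have hk := hkey _ hz
    simp only [hA'_def, hB'_def, hΦ'_def, hY'_def, hT'_def, ContinuousLinearMap.add_apply,
      ContinuousLinearMap.sub_apply, ContinuousLinearMap.comp_apply,
      ContinuousLinearMap.smul_apply, ContinuousLinearMap.prod_apply,
      ContinuousLinearMap.coe_fst', ContinuousLinearMap.coe_snd', smul_eq_mul,
      mul_one, mul_zero, add_zero, zero_add]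
    rw [clm_pair (W' (Φ p)) 1 (p.2 * deriv η p.1), clm_pair (V' (Φ p)) 0 (η p.1 + d),
      clm_pair (W' (Φ p)) 0 (η p.1 + d)]
    linear_combination (η p.1 + d) * hk
  -- continuity of A and B on the closed rectangle
  have hwcont : ContinuousOn w (closure D) :=
    (Real.continuous_sqrt.comp_continuousOn hρC.continuousOn).mul
      (huC.continuousOn.sub continuousOn_const)
  have hbcont : ContinuousOn b (closure D) :=
    (Real.continuous_sqrt.comp_continuousOn hρC.continuousOn).mul hvC.continuousOn
  have hΦcont : Continuous Φ :=
    continuous_fst.prodMk (continuous_const.add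
      (continuous_snd.mul ((hηcont.comp continuous_fst).add continuous_const)))
  have hmaps : MapsTo Φ (uIcc x₁ x₂ ×ˢ uIcc (0:ℝ) 1) (closure D) := by
    rintro ⟨x, s⟩ ⟨-, hs⟩
    have hs' : s ∈ Icc (0:ℝ) 1 := by
      rwa [uIcc_of_le (by norm_num : (0:ℝ) ≤ 1)] at hs
    exact hclos2 x s hs'.1 hs'.2
  have HcA : ContinuousOn A (uIcc x₁ x₂ ×ˢ uIcc (0:ℝ) 1) :=
    (((hηcont.comp continuous_fst).add continuous_const).continuousOn).mul
      (hwcont.comp hΦcont.continuousOn hmaps)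
  have HcB : ContinuousOn B (uIcc x₁ x₂ ×ˢ uIcc (0:ℝ) 1) :=
    (hbcont.comp hΦcont.continuousOn hmaps).sub
      (((continuous_snd.mul (hη'cont.comp continuous_fst)).continuousOn).mul
        (hwcont.comp hΦcont.continuousOn hmaps))
  -- integrability of the (a.e. vanishing) divergence
  have hrectm : MeasurableSet (uIcc x₁ x₂ ×ˢ uIcc (0:ℝ) 1) :=
    measurableSet_uIcc.prod measurableSet_uIcc
  have hnull : volume {p : ℝ × ℝ | p.2 = 0 ∨ p.2 = 1} = 0 := by
    have hset : {p : ℝ × ℝ | p.2 = 0 ∨ p.2 = 1} = (univ : Set ℝ) ×ˢ ({0, 1} : Set ℝ) := by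
      ext ⟨a, bb⟩
      simp [Set.mem_prod]
    rw [hset, Measure.volume_eq_prod, Measure.prod_prod]
    simp [Set.Finite.measure_zero (Set.toFinite ({0, 1} : Set ℝ)) volume]
  have hae0 : ∀ᵐ p : ℝ × ℝ, p ∉ {p : ℝ × ℝ | p.2 = 0 ∨ p.2 = 1} :=
    measure_eq_zero_iff_ae_notMem.mp hnull
  have Hi : IntegrableOn (fun p : ℝ × ℝ => A' p (1, 0) + B' p (0, 1))
      (uIcc x₁ x₂ ×ˢ uIcc (0:ℝ) 1) := by
    have hz : (fun _ : ℝ × ℝ => (0:ℝ))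
        =ᵐ[volume.restrict (uIcc x₁ x₂ ×ˢ uIcc (0:ℝ) 1)]
        (fun p => A' p (1, 0) + B' p (0, 1)) := by
      filter_upwards [ae_restrict_mem hrectm, ae_restrict_of_ae hae0] with p hp hp2
      have hs : p.2 ∈ Icc (0:ℝ) 1 := by
        have := hp.2
        rwa [uIcc_of_le (by norm_num : (0:ℝ) ≤ 1)] at this
      have hne := not_or.mp hp2
      have hmem : p.2 ∈ Ioo (0:ℝ) 1 :=
        ⟨lt_of_le_of_ne hs.1 (Ne.symm hne.1), lt_of_le_of_ne hs.2 hne.2⟩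
      exact (hdiv0 p hmem).symm
    exact (integrableOn_zero).congr hz
  -- the inner integral of the divergence vanishes
  have hinner : ∀ x : ℝ, (∫ s in (0:ℝ)..1, (A' (x, s) (1, 0) + B' (x, s) (0, 1))) = 0 := by
    intro x
    have hne1 : ∀ᵐ s : ℝ, s ≠ 1 := by
      have h1 : volume ({1} : Set ℝ) = 0 := measure_singleton 1
      have := measure_eq_zero_iff_ae_notMem.mp h1
      simpa using this
    have h1 : ∀ᵐ s : ℝ, s ∈ uIoc (0:ℝ) 1 → (A' (x, s) (1, 0) + B' (x, s) (0, 1)) = (0:ℝ) := by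
      filter_upwards [hne1] with s hsne hs
      rw [uIoc_of_le (by norm_num : (0:ℝ) ≤ 1)] at hs
      exact hdiv0 (x, s) ⟨hs.1, lt_of_le_of_ne hs.2 hsne⟩
    rw [intervalIntegral.integral_congr_ae h1]
    simp
  -- boundary values of B vanish
  have hBtop : ∀ x : ℝ, B (x, 1) = 0 := by
    intro x
    simp only [hB_def, hΦ_def, hw_def, hb_def]
    rw [show -d + (1:ℝ) * (η x + d) = η x from by ring]
    linear_combination Real.sqrt (ρ (x, η x)) * hkin x
  have hBbot : ∀ x : ℝ, B (x, 0) = 0 := by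
    intro x
    simp only [hB_def, hΦ_def, hw_def, hb_def]
    rw [show -d + (0:ℝ) * (η x + d) = -d from by ring]
    rw [hbed x]
    ring
  -- the slice integrals of A give the flux
  have hfluxA : ∀ x : ℝ, (∫ s in (0:ℝ)..1, A (x, s))
      = ∫ y in (-d)..(η x), Real.sqrt (ρ (x, y)) * (u (x, y) - c) := by
    intro x
    have hne : (η x + d) ≠ 0 := ne_of_gt (hh x)
    have h0 : (∫ s in (0:ℝ)..1, A (x, s))
        = (η x + d) * ∫ s in (0:ℝ)..1, w (x, -d + (η x + d) * s) := by
      rw [← intervalIntegral.integral_const_mul]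
      apply intervalIntegral.integral_congr
      intro s _
      simp only [hA_def, hΦ_def]
      rw [mul_comm s (η x + d)]
    have hsub := intervalIntegral.integral_comp_add_mul (a := (0:ℝ)) (b := (1:ℝ))
      (fun y => w (x, y)) hne (-d)
    rw [h0, hsub, show -d + (η x + d) * (0:ℝ) = -d from by ring,
      show -d + (η x + d) * (1:ℝ) = η x from by ring, smul_eq_mul, ← mul_assoc,
      mul_inv_cancel₀ hne, one_mul]
  -- apply the divergence theorem on the rectangle
  have hdA : ∀ p ∈ (Ioo (min x₁ x₂) (max x₁ x₂) ×ˢ Ioo (min (0:ℝ) 1) (max (0:ℝ) 1)) \ ∅,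
      HasFDerivAt A (A' p) p := by
    intro p hp
    have h2 := hp.1.2
    rw [min_eq_left (by norm_num : (0:ℝ) ≤ 1), max_eq_right (by norm_num : (0:ℝ) ≤ 1)] at h2
    exact hAd p h2
  have hdB : ∀ p ∈ (Ioo (min x₁ x₂) (max x₁ x₂) ×ˢ Ioo (min (0:ℝ) 1) (max (0:ℝ) 1)) \ ∅,
      HasFDerivAt B (B' p) p := by
    intro p hp
    have h2 := hp.1.2
    rw [min_eq_left (by norm_num : (0:ℝ) ≤ 1), max_eq_right (by norm_num : (0:ℝ) ≤ 1)] at h2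
    exact hBd p h2
  have hmain := integral2_divergence_prod_of_hasFDerivAt_off_countable
    A B A' B' x₁ 0 x₂ 1 ∅ countable_empty HcA HcB hdA hdB Hi
  -- simplify the conclusion of the divergence theorem
  have hLHS : (∫ x in x₁..x₂, ∫ s in (0:ℝ)..1, (A' (x, s) (1, 0) + B' (x, s) (0, 1))) = 0 := by
    rw [intervalIntegral.integral_congr (g := fun _ => (0:ℝ)) (fun x _ => hinner x)]
    simp
  have hb1 : (∫ x in x₁..x₂, B (x, 1)) = 0 := by
    rw [intervalIntegral.integral_congr (g := fun _ => (0:ℝ)) (fun x _ => hBtop x)]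
    simp
  have hb0 : (∫ x in x₁..x₂, B (x, 0)) = 0 := by
    rw [intervalIntegral.integral_congr (g := fun _ => (0:ℝ)) (fun x _ => hBbot x)]
    simp
  rw [hLHS, hb1, hb0, hfluxA x₁, hfluxA x₂] at hmain
  linear_combination hmain
end

section
/- The difference of two solutions of the height equation lies in the kernel of the linearized operator: if (h,Q) and (h̃,Q) are two solutions of the height equation (with the same Q, the same data ρ̂, β, and d(h) = d(h̃)), then w := h − h̃ satisfies 𝓛w = 0 at every point of R, where 𝓛w := (1+h_q²)h_p⁻³ w_{pp} + h_p⁻¹ w_{qq} − 2h_q h_p⁻² w_{pq} + h_p⁻³[h̃_{qq}(h_p+h̃_p) − 2h̃_q h̃_{pq} + β(−p)(h_p² + h_p h̃_p + h̃_p²) − g ρ̂′(p)(h̃ − d(h̃))(h_p² + h_p h̃_p + h̃_p²)] w_p + h_p⁻³[h̃_{pp}(h_q + h̃_q) − 2 h_p h̃_{pq}] w_q − g ρ̂′(p) w. -/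
open Set MeasureTheory

/-- The linearized operator `𝓛` associated with two solutions `h`, `ht` of the height
equation (with `dht` the mean depth of `ht`). -/
noncomputable def heightOp (g dht : ℝ) (ρh β : ℝ → ℝ) (h ht : ℝ × ℝ → ℝ)
    (w : ℝ × ℝ → ℝ) (z : ℝ × ℝ) : ℝ :=
  (1 + (pdx h z) ^ 2) * ((pdy h z) ^ 3)⁻¹ * pdy (pdy w) z
    + (pdy h z)⁻¹ * pdx (pdx w) z
    - 2 * pdx h z * ((pdy h z) ^ 2)⁻¹ * pdy (pdx w) z
    + ((pdy h z) ^ 3)⁻¹ * (pdx (pdx ht) z * (pdy h z + pdy ht z)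
        - 2 * pdx ht z * pdy (pdx ht) z
        + β (-z.2) * ((pdy h z) ^ 2 + pdy h z * pdy ht z + (pdy ht z) ^ 2)
        - g * deriv ρh z.2 * (ht z - dht)
            * ((pdy h z) ^ 2 + pdy h z * pdy ht z + (pdy ht z) ^ 2)) * pdy w z
    + ((pdy h z) ^ 3)⁻¹ * (pdy (pdy ht) z * (pdx h z + pdx ht z)
        - 2 * pdy h z * pdy (pdx ht) z) * pdx w z
    - g * deriv ρh z.2 * w z

lemma pd_sub (f g : ℝ × ℝ → ℝ) (z : ℝ × ℝ) (v : ℝ × ℝ)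
    (hf : DifferentiableAt ℝ f z) (hg : DifferentiableAt ℝ g z) :
    fderiv ℝ (fun x => f x - g x) z v = fderiv ℝ f z v - fderiv ℝ g z v := by
  rw [fderiv_fun_sub hf hg]; rfl

lemma pdv_contDiffAt (f : ℝ × ℝ → ℝ) (z : ℝ × ℝ) (v : ℝ × ℝ)
    (hf : ContDiffAt ℝ 2 f z) :
    ContDiffAt ℝ 1 (fun x => fderiv ℝ f x v) z :=
  (hf.fderiv_right (by norm_num)).clm_apply contDiffAt_const

lemma pd2_sub (f g : ℝ × ℝ → ℝ) (z : ℝ × ℝ) (v u : ℝ × ℝ)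
    (hf : ContDiffAt ℝ 2 f z) (hg : ContDiffAt ℝ 2 g z) :
    fderiv ℝ (fun x => fderiv ℝ (fun y => f y - g y) x v) z u
      = fderiv ℝ (fun x => fderiv ℝ f x v) z u - fderiv ℝ (fun x => fderiv ℝ g x v) z u := by
  have hev : (fun x => fderiv ℝ (fun y => f y - g y) x v)
      =ᶠ[nhds z] (fun x => fderiv ℝ f x v - fderiv ℝ g x v) := by
    filter_upwards [hf.eventually (by norm_num), hg.eventually (by norm_num)] with x hfx hgx
    rw [pd_sub f g x v (hfx.differentiableAt (by norm_num)) (hgx.differentiableAt (by norm_num))]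
  rw [hev.fderiv_eq, pd_sub _ _ z u
    ((pdv_contDiffAt f z v hf).differentiableAt (by norm_num))
    ((pdv_contDiffAt g z v hg).differentiableAt (by norm_num))]

/-- The difference of two solutions of the height equation (with the same `Q` and the
same mean depth) lies in the kernel of the linearized operator `𝓛`. -/
theorem difference_in_kernel_of_linearized_operator
    (L p₀ g : ℝ) (hL : 0 < L) (hp₀neg : p₀ < 0) (hg : 0 < g)
    (R : Set (ℝ × ℝ)) (hRdef : R = Ioo (-(L/2)) (L/2) ×ˢ Ioo p₀ 0)
    (ρh : ℝ → ℝ) (hρhC : ContDiffOn ℝ 2 ρh (Icc p₀ 0))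
    (hρhpos : ∀ p ∈ Icc p₀ 0, 0 < ρh p)
    (hρhdec : ∀ p ∈ Icc p₀ 0, deriv ρh p ≤ 0)
    (β : ℝ → ℝ) (hβC : ContDiffOn ℝ 1 β (Icc (0 : ℝ) (|p₀|)))
    (Q : ℝ)
    (h : ℝ × ℝ → ℝ) (dh : ℝ)
    (hdhdef : dh = (1 / L) * ∫ q in (-(L/2))..(L/2), h (q, 0))
    (hhC : ContDiffOn ℝ 3 h (closure R))
    (hhper : ∀ q p, h (q + L, p) = h (q, p))
    (hhp : ∀ z ∈ closure R, 0 < pdy h z)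
    (hhpde : ∀ z ∈ R,
      (1 + (pdx h z) ^ 2) * pdy (pdy h) z + pdx (pdx h) z * (pdy h z) ^ 2
          - 2 * pdx h z * pdy h z * pdy (pdx h) z
          - g * (h z - dh) * (pdy h z) ^ 3 * deriv ρh z.2
        = -(pdy h z) ^ 3 * β (-z.2))
    (hhbot : ∀ q : ℝ, h (q, p₀) = 0)
    (hhtop : ∀ q : ℝ, 1 + (pdx h (q, 0)) ^ 2
        + (pdy h (q, 0)) ^ 2 * (2 * g * ρh 0 * h (q, 0) - Q) = 0)
    (ht : ℝ × ℝ → ℝ) (dht : ℝ)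
    (hdhtdef : dht = (1 / L) * ∫ q in (-(L/2))..(L/2), ht (q, 0))
    (hhtC : ContDiffOn ℝ 3 ht (closure R))
    (hhtper : ∀ q p, ht (q + L, p) = ht (q, p))
    (hhtp : ∀ z ∈ closure R, 0 < pdy ht z)
    (hhtpde : ∀ z ∈ R,
      (1 + (pdx ht z) ^ 2) * pdy (pdy ht) z + pdx (pdx ht) z * (pdy ht z) ^ 2
          - 2 * pdx ht z * pdy ht z * pdy (pdx ht) z
          - g * (ht z - dht) * (pdy ht z) ^ 3 * deriv ρh z.2
        = -(pdy ht z) ^ 3 * β (-z.2))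
    (hhtbot : ∀ q : ℝ, ht (q, p₀) = 0)
    (hhttop : ∀ q : ℝ, 1 + (pdx ht (q, 0)) ^ 2
        + (pdy ht (q, 0)) ^ 2 * (2 * g * ρh 0 * ht (q, 0) - Q) = 0)
    (hdd : dh = dht) :
    ∀ z ∈ R, heightOp g dht ρh β h ht (fun w => h w - ht w) z = 0 := by
  intro z hz
  have hRopen : IsOpen R := by rw [hRdef]; exact (isOpen_Ioo).prod isOpen_Ioo
  have hnhds : closure R ∈ nhds z := mem_nhds_iff.2 ⟨R, subset_closure, hRopen, hz⟩
  have hh2 : ContDiffAt ℝ 2 h z := (hhC.contDiffAt hnhds).of_le (by norm_num)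
  have hht2 : ContDiffAt ℝ 2 ht z := (hhtC.contDiffAt hnhds).of_le (by norm_num)
  have hh1 : DifferentiableAt ℝ h z := hh2.differentiableAt (by norm_num)
  have hht1 : DifferentiableAt ℝ ht z := hht2.differentiableAt (by norm_num)
  have e1 : pdx (fun w => h w - ht w) z = pdx h z - pdx ht z := pd_sub h ht z _ hh1 hht1
  have e2 : pdy (fun w => h w - ht w) z = pdy h z - pdy ht z := pd_sub h ht z _ hh1 hht1
  have e3 : pdy (pdy (fun w => h w - ht w)) z = pdy (pdy h) z - pdy (pdy ht) z :=
    pd2_sub h ht z _ _ hh2 hht2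
  have e4 : pdx (pdx (fun w => h w - ht w)) z = pdx (pdx h) z - pdx (pdx ht) z :=
    pd2_sub h ht z _ _ hh2 hht2
  have e5 : pdy (pdx (fun w => h w - ht w)) z = pdy (pdx h) z - pdy (pdx ht) z :=
    pd2_sub h ht z _ _ hh2 hht2
  have hb : pdy h z ≠ 0 := ne_of_gt (hhp z (subset_closure hz))
  have E1 := hhpde z hz
  have E2 := hhtpde z hz
  rw [hdd] at E1
  unfold heightOp
  rw [e1, e2, e3, e4, e5]
  simp only
  field_simp
  linear_combination E1 - E2
end
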